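/- In the semiring S = M₂(ℝ⁺), for every r ∈ ℝ⁺ with r ≠ 0, the set Nᵣ = { [[ra, a],[rb, b]] : a, b ∈ ℝ⁺ } is a subtractive left ideal of S. -/
import Mathlib


/-- The 2×2 matrix semiring over the nonnegative reals. -/
abbrev M2 : Type := Matrix (Fin 2) (Fin 2) NNReal

/-- A subset of the semiring is a left ideal. -/
def IsLeftIdeal (I : Set M2) : Prop :=
  0 ∈ I ∧ (∀ x ∈ I, ∀ y ∈ I, x + y ∈ I) ∧ ∀ s : M2, ∀ x ∈ I, s * x ∈ I

/-- A subset is subtractive: `s + x = y` with `x, y ∈ I` implies `s ∈ I`. -/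
def IsSubtractive (I : Set M2) : Prop :=
  ∀ s x y : M2, x ∈ I → y ∈ I → s + x = y → s ∈ I

/-- `Nᵣ = { [[ra,a],[rb,b]] : a, b ∈ ℝ⁺ }`. -/
def Nr (r : NNReal) : Set M2 :=
  {A | ∃ a b : NNReal, A 0 0 = r * a ∧ A 0 1 = a ∧ A 1 0 = r * b ∧ A 1 1 = b}

lemma mem_Nr_iff (r : NNReal) (A : M2) :
    A ∈ Nr r ↔ A 0 0 = r * A 0 1 ∧ A 1 0 = r * A 1 1 := by
  constructor
  · rintro ⟨a, b, h1, h2, h3, h4⟩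
    exact ⟨by rw [h1, h2], by rw [h3, h4]⟩
  · rintro ⟨h1, h2⟩
    exact ⟨A 0 1, A 1 1, h1, rfl, h2, rfl⟩

/-- For every `r ∈ ℝ⁺ \ {0}`, `Nᵣ` is a subtractive left ideal of `M₂(ℝ⁺)`. -/
theorem stmt_7 (r : NNReal) (hr : r ≠ 0) : IsLeftIdeal (Nr r) ∧ IsSubtractive (Nr r) := by
  refine ⟨⟨?_, ?_, ?_⟩, ?_⟩
  · simp [mem_Nr_iff]
  · intro x hx y hy
    rw [mem_Nr_iff] at *
    obtain ⟨hx1, hx2⟩ := hx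
    obtain ⟨hy1, hy2⟩ := hy
    constructor <;> simp [Matrix.add_apply, hx1, hx2, hy1, hy2, mul_add]
  · intro s x hx
    rw [mem_Nr_iff] at *
    obtain ⟨hx1, hx2⟩ := hx
    constructor <;>
      simp [Matrix.mul_apply, Fin.sum_univ_two, hx1, hx2, mul_add] <;> ring
  · intro s x y hx hy heq
    rw [mem_Nr_iff] at *
    obtain ⟨hx1, hx2⟩ := hx
    obtain ⟨hy1, hy2⟩ := hy
    have e00 : s 0 0 + x 0 0 = y 0 0 := by rw [← heq]; rfl
    have e01 : s 0 1 + x 0 1 = y 0 1 := by rw [← heq]; rfl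
    have e10 : s 1 0 + x 1 0 = y 1 0 := by rw [← heq]; rfl
    have e11 : s 1 1 + x 1 1 = y 1 1 := by rw [← heq]; rfl
    constructor
    · have : s 0 0 + r * x 0 1 = r * s 0 1 + r * x 0 1 := by
        rw [← hx1, e00, hy1, ← e01, mul_add, hx1]
      exact add_right_cancel this
    · have : s 1 0 + r * x 1 1 = r * s 1 1 + r * x 1 1 := by
        rw [← hx2, e10, hy2, ← e11, mul_add, hx2]
      exact add_right_cancel this
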